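/- For a word w = b₁⋯bₙ over a finite alphabet Σ with |Σ| ≥ 2, the ideal I = (Σ∖{b₁})*·{b₁,ε}·(Σ∖{b₂})*·{b₂,ε}⋯(Σ∖{b_{n−1}})*·{b_{n−1},ε}·(Σ∖{bₙ})* satisfies I ∩ Σⁿ = Σⁿ ∖ {w}. -/

import Mathlib

def IsDirectedLang {A : Type*} (L : Set (List A)) : Prop :=
  ∀ u ∈ L, ∀ v ∈ L, ∃ w ∈ L, u.Sublist w ∧ v.Sublist w

def dcl {A : Type*} (L : Set (List A)) : Set (List A) := {u | ∃ v ∈ L, u.Sublist v}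

def DownwardClosed {A : Type*} (D : Set (List A)) : Prop :=
  ∀ u v : List A, u.Sublist v → v ∈ D → u ∈ D

def IsIdeal {A : Type*} (I : Set (List A)) : Prop :=
  I.Nonempty ∧ DownwardClosed I ∧ IsDirectedLang I

inductive Atom (A : Type*) where
  | single : A → Atom A
  | alph : Finset A → Atom A

def Atom.lang {A : Type*} : Atom A → Set (List A)
  | .single a => {[], [a]}
  | .alph d => {w | ∀ c ∈ w, c ∈ d}

def Atom.Valid {A : Type*} : Atom A → Prop
  | .single _ => True
  | .alph d => d.Nonempty

def conc {A : Type*} (L M : Set (List A)) : Set (List A) :=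
  {w | ∃ u ∈ L, ∃ v ∈ M, w = u ++ v}

def Idl {A : Type*} : List (Atom A) → Set (List A)
  | [] => {[]}
  | α :: r => conc α.lang (Idl r)

def LeftAbsorbs {A : Type*} (α β : Atom A) : Prop := Idl [α, β] = Idl [α]
def RightAbsorbs {A : Type*} (α β : Atom A) : Prop := Idl [α, β] = Idl [β]
def Absorptive {A : Type*} (α β : Atom A) : Prop := LeftAbsorbs α β ∨ RightAbsorbs α β
def Reduced {A : Type*} (r : List (Atom A)) : Prop := r.Chain' fun α β => ¬ Absorptive α β

def atomWeight {A : Type*} (k : ℕ) : Atom A → ℕ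
  | .single _ => 1
  | .alph d => (k+1) ^ d.card

def repWeight {A : Type*} (k : ℕ) (r : List (Atom A)) : ℕ := (r.map (atomWeight k)).sum

def compRep {A : Type*} [Fintype A] [DecidableEq A] : List A → List (Atom A)
  | [] => []
  | [b] => [Atom.alph {b}ᶜ]
  | b :: c :: rest => Atom.alph {b}ᶜ :: Atom.single b :: compRep (c :: rest)
lemma exists_first {A : Type*} [DecidableEq A] (b : A) :
    ∀ (x : List A), b ∈ x → ∃ u y, x = u ++ b :: y ∧ b ∉ u
  | a :: t, h => by
    by_cases hab : a = b
    · exact ⟨[], t, by simp [hab], by simp⟩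
    · obtain ⟨u, y, h1, h2⟩ := exists_first b t (by
        rcases List.mem_cons.mp h with h | h
        · exact absurd h.symm hab
        · exact h)
      exact ⟨a :: u, y, by simp [h1], by
        simp only [List.mem_cons]
        rintro (rfl | hb)
        · exact hab rfl
        · exact h2 hb⟩

lemma sublist_of_append_left {A : Type*} {b : A} {l u y : List A}
    (h : (b :: l).Sublist (u ++ y)) (hb : b ∉ u) : (b :: l).Sublist y := by
  rw [List.sublist_append_iff] at h
  obtain ⟨l₁, l₂, heq, h1, h2⟩ := h
  cases l₁ with
  | nil => rw [List.nil_append] at heq; exact heq ▸ h2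
  | cons a t =>
    have : a = b := by simpa using congrArg (·.head?) heq.symm
    subst this
    exact absurd (h1.subset List.mem_cons_self) hb

lemma mem_Idl_compRep {A : Type*} [Fintype A] [DecidableEq A] :
    ∀ (w : List A), w ≠ [] → ∀ (x : List A), (x ∈ Idl (compRep w) ↔ ¬ w.Sublist x)
  | [], hw => absurd rfl hw
  | [b], _ => by
    intro x
    simp only [compRep, Idl, conc, Atom.lang, Set.mem_setOf_eq, Set.mem_singleton_iff]
    constructor
    · rintro ⟨u, hu, v, rfl, rfl⟩ hs
      have : b ∈ u := List.singleton_sublist.mp (by simpa using hs)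
      simpa using hu b this
    · intro h
      refine ⟨x, ?_, [], rfl, by simp⟩
      intro c hc
      simp only [Finset.mem_compl, Finset.mem_singleton]
      rintro rfl
      exact h (List.singleton_sublist.mpr hc)
  | b :: c :: rest, _ => by
    intro x
    have IH := mem_Idl_compRep (c :: rest) (by simp)
    simp only [compRep, Idl, conc, Atom.lang, Set.mem_setOf_eq, Set.mem_insert_iff,
      Set.mem_singleton_iff]
    constructor
    · rintro ⟨u, hu, z, ⟨v, hv, y, hy, rfl⟩, rfl⟩ hs
      have hbu : b ∉ u := by
        intro hb
        simpa using hu b hb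
      have hy' : ¬ (c :: rest).Sublist y := (IH y).mp hy
      rcases hv with rfl | rfl
      · simp only [List.nil_append] at hs
        have := sublist_of_append_left hs hbu
        exact hy' (List.sublist_of_cons_sublist this)
      · have h2 : (b :: c :: rest).Sublist (b :: y) := by
          have := sublist_of_append_left (l := c :: rest) (u := u) (y := b :: y) (by simpa using hs) hbu
          exact this
        exact hy' (List.cons_sublist_cons.mp h2)
    · intro hs
      by_cases hb : b ∈ x
      · obtain ⟨u, y, rfl, hbu⟩ := exists_first b x hb
        have hy : ¬ (c :: rest).Sublist y := by
          intro h
          exact hs (List.Sublist.append (List.nil_sublist u) (List.cons_sublist_cons.mpr h))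
        refine ⟨u, ?_, b :: y, ⟨[b], Or.inr rfl, y, (IH y).mpr hy, rfl⟩, rfl⟩
        intro d hd
        simp only [Finset.mem_compl, Finset.mem_singleton]
        rintro rfl
        exact hbu hd
      · refine ⟨x, ?_, [], ⟨[], Or.inl rfl, [], (IH []).mpr (by simp), rfl⟩, by simp⟩
        intro d hd
        simp only [Finset.mem_compl, Finset.mem_singleton]
        rintro rfl
        exact hb hd

theorem complement_ideal {A : Type*} [Fintype A] [DecidableEq A]
    (hcard : 2 ≤ Fintype.card A) (w : List A) (hw : w ≠ []) :
    Idl (compRep w) ∩ {x : List A | x.length = w.length} =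
      {x : List A | x.length = w.length} \ {w} := by
  ext x
  simp only [Set.mem_inter_iff, Set.mem_diff, Set.mem_setOf_eq, Set.mem_singleton_iff,
    mem_Idl_compRep w hw x]
  constructor
  · rintro ⟨h1, h2⟩
    exact ⟨h2, fun h => h1 (h ▸ List.Sublist.refl x)⟩
  · rintro ⟨h1, h2⟩
    exact ⟨fun h => h2 ((h.eq_of_length (h1.symm)).symm), h1⟩
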